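/- The trace distance between the 3×3 density matrices ρ₀ = (a|0⟩+b|1⟩)(a⟨0|+b⟨1|) + c²|2⟩⟨2| and ρ₁ = (a|0⟩−b|1⟩)(a⟨0|−b⟨1|) + c²|2⟩⟨2|, where a,b,c ≥ 0 and a²+b²+c²=1, equals 2ab. -/

import Mathlib

open Matrix
open scoped ComplexOrder

/-- Trace distance `D(ρ,σ) = (1/2) Tr |ρ-σ|` where `|A| = √(AᴴA)`. -/
noncomputable def traceDist {n : Type*} [Fintype n] [DecidableEq n]
    (ρ σ : Matrix n n ℂ) : ℝ :=
  (1 / 2 : ℝ) * (((Matrix.posSemidef_conjTranspose_mul_self (ρ - σ)).1.eigenvectorUnitary.1 *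
    diagonal (((↑) : ℝ → ℂ) ∘ (√·) ∘ (Matrix.posSemidef_conjTranspose_mul_self (ρ - σ)).1.eigenvalues) *
    (star (Matrix.posSemidef_conjTranspose_mul_self (ρ - σ)).1.eigenvectorUnitary :
      Matrix n n ℂ)).trace).re

theorem stmt_2 (a b c : ℝ) (ha : 0 ≤ a) (hb : 0 ≤ b) (hc : 0 ≤ c)
    (h : a ^ 2 + b ^ 2 + c ^ 2 = 1)
    (ρ₀ ρ₁ : Matrix (Fin 3) (Fin 3) ℂ)
    (hρ₀ : ρ₀ = !![(a : ℂ) ^ 2, (a : ℂ) * b, 0;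
                   (a : ℂ) * b, (b : ℂ) ^ 2, 0;
                   0, 0, (c : ℂ) ^ 2])
    (hρ₁ : ρ₁ = !![(a : ℂ) ^ 2, -((a : ℂ) * b), 0;
                   -((a : ℂ) * b), (b : ℂ) ^ 2, 0;
                   0, 0, (c : ℂ) ^ 2]) :
    traceDist ρ₀ ρ₁ = 2 * (a * b) := by
  set S : Matrix (Fin 3) (Fin 3) ℂ :=
    Matrix.diagonal ![(2 * a * b : ℂ), (2 * a * b : ℂ), 0] with hS
  have hab : (0 : ℂ) ≤ (2 * a * b : ℂ) := by
    rw [Complex.le_def]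
    constructor <;> simp [mul_nonneg, ha, hb, mul_nonneg (mul_nonneg (by norm_num : (0:ℝ) ≤ 2) ha) hb]
  have hSpsd : S.PosSemidef := by
    refine Matrix.posSemidef_diagonal_iff.mpr fun i => ?_
    fin_cases i <;> simp [hab]
  have hsq : S ^ 2 = (ρ₀ - ρ₁)ᴴ * (ρ₀ - ρ₁) := by
    subst hρ₀ hρ₁
    ext i j
    fin_cases i <;> fin_cases j <;>
      simp [hS, pow_two, Matrix.mul_apply, Fin.sum_univ_three, Matrix.diagonal,
        Matrix.conjTranspose_apply, Matrix.vecHead, Matrix.vecTail] <;> ring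
  have hsqrt : S = ((Matrix.posSemidef_conjTranspose_mul_self (ρ₀ - ρ₁)).1.eigenvectorUnitary.1 *
      diagonal (((↑) : ℝ → ℂ) ∘ (√·) ∘ (Matrix.posSemidef_conjTranspose_mul_self (ρ₀ - ρ₁)).1.eigenvalues) *
      (star (Matrix.posSemidef_conjTranspose_mul_self (ρ₀ - ρ₁)).1.eigenvectorUnitary :
        Matrix (Fin 3) (Fin 3) ℂ)) := by
    open scoped MatrixOrder in
    have hM := Matrix.posSemidef_conjTranspose_mul_self (ρ₀ - ρ₁)
    open scoped MatrixOrder in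
    have hMnn : (0 : Matrix (Fin 3) (Fin 3) ℂ) ≤ (ρ₀ - ρ₁)ᴴ * (ρ₀ - ρ₁) := hM.nonneg
    open scoped MatrixOrder in
    have h1 : CFC.sqrt ((ρ₀ - ρ₁)ᴴ * (ρ₀ - ρ₁)) = S :=
      CFC.sqrt_unique (by rw [← pow_two]; exact hsq) hSpsd.nonneg
    open scoped MatrixOrder in
    rw [← h1, CFC.sqrt_eq_real_sqrt _ hMnn, cfcₙ_eq_cfc, hM.1.cfc_eq]
    rfl
  rw [traceDist, ← hsqrt]
  simp [hS, Matrix.trace, Matrix.diag, Fin.sum_univ_three, Matrix.diagonal]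
  ring
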